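/- For every 0 ≤ q ≤ n and all π, τ ∈ W_n with π ≤_e p_{n,q} and τ ≤_e p_{n,q}, the product π·σ_{n,q}·τ^{−1} is reduced, i.e. ℓ(π·σ_{n,q}·τ^{−1}) = ℓ(π) + ℓ(σ_{n,q}) + ℓ(τ). -/

import Mathlib

namespace BnPaper

/-- The generator `t`: swaps `1` and `-1`, fixing all other points. -/
def t : Equiv.Perm ℤ := Equiv.swap 1 (-1)

/-- The generator `s i`: swaps `i ↔ i+1` and `-i ↔ -(i+1)`. -/
def s (i : ℤ) : Equiv.Perm ℤ := Equiv.swap i (i + 1) * Equiv.swap (-i) (-(i + 1))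

/-- The descending product `s_j · s_{j-1} ⋯ s_i` (the identity when `i > j`). -/
def desc (i j : ℕ) : Equiv.Perm ℤ :=
  ((List.range (j + 1 - i)).map (fun k => s ((j : ℤ) - (k : ℤ)))).prod

/-- The ascending product `s_i · s_{i+1} ⋯ s_j` (the identity when `i > j`). -/
def asc (i j : ℕ) : Equiv.Perm ℤ :=
  ((List.range (j + 1 - i)).map (fun k => s ((i : ℤ) + (k : ℤ)))).prod

/-- `t_j = s_{j-1} ⋯ s_1 · t · s_1 ⋯ s_{j-1}`. -/
def tt (j : ℕ) : Equiv.Perm ℤ := desc 1 (j - 1) * t * (desc 1 (j - 1))⁻¹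

/-- The Coxeter generating set `{t, s_1, …, s_{n-1}}` of `W_n`. -/
def gens (n : ℕ) : Set (Equiv.Perm ℤ) :=
  insert t {g | ∃ i : ℕ, 1 ≤ i ∧ i ≤ n - 1 ∧ g = s (i : ℤ)}

/-- The Coxeter length: the least number of generators whose product is `w`. -/
noncomputable def len (n : ℕ) (w : Equiv.Perm ℤ) : ℕ :=
  sInf {k | ∃ l : List (Equiv.Perm ℤ), l.length = k ∧ (∀ g ∈ l, g ∈ gens n) ∧ l.prod = w}

/-- `W_n` realised as the signed permutations of `{-n, …, -1, 1, …, n}`: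
permutations of `ℤ` that are odd (`w(-i) = -w(i)`) and fix everything beyond `n` in
absolute value. -/
def W (n : ℕ) : Set (Equiv.Perm ℤ) :=
  {w | (∀ i : ℤ, w (-i) = -(w i)) ∧ ∀ i : ℤ, (n : ℤ) < |i| → w i = i}

/-- The right descent set `Des(w)`. -/
def Des (n : ℕ) (w : Equiv.Perm ℤ) : Set (Equiv.Perm ℤ) :=
  {g | g ∈ gens n ∧ len n (w * g) < len n w}

/-- The enhanced descent-set invariant
`ρ_m(w) = Des(w) ∪ {t_j : 2 ≤ j ≤ m, ℓ(w t_j) < ℓ(w)}`. -/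
def rho (n m : ℕ) (w : Equiv.Perm ℤ) : Set (Equiv.Perm ℤ) :=
  Des n w ∪ {g | ∃ j : ℕ, 2 ≤ j ∧ j ≤ m ∧ g = tt j ∧ len n (w * tt j) < len n w}

/-- `Área_n`: the negative entries of the row form appear in increasing order and
the positive entries in strictly decreasing order. -/
def Area (n : ℕ) : Set (Equiv.Perm ℤ) :=
  {w | w ∈ W n ∧ ∀ i j : ℤ, 1 ≤ i → i < j → j ≤ (n : ℤ) →
    (w i < 0 → w j < 0 → w i < w j) ∧ (0 < w i → 0 < w j → w j < w i)}

/-- The suffix relation `y ≤_e w`: `w = z · y` with `ℓ(w) = ℓ(z) + ℓ(y)`. -/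
def Suf (n : ℕ) (y w : Equiv.Perm ℤ) : Prop :=
  ∃ z, z ∈ W n ∧ w = z * y ∧ len n w = len n z + len n y

/-- `a_q = (t)(s_1 t)(s_2 s_1 t) ⋯ (s_{q-1} ⋯ s_1 t)`. -/
def aw (q : ℕ) : Equiv.Perm ℤ := ((List.range q).map (fun k => desc 1 k * t)).prod

/-- `b_q = (s_{q+1})(s_{q+2} s_{q+1}) ⋯ (s_{n-1} ⋯ s_{q+1})` (identity for `q ≥ n-1`). -/
def bw (n q : ℕ) : Equiv.Perm ℤ :=
  ((List.range (n - 1 - q)).map (fun k => desc (q + 1) (q + 1 + k))).prod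

/-- `σ_{n,q} = a_q · b_q`. -/
def sig (n q : ℕ) : Equiv.Perm ℤ := aw q * bw n q

/-- `p_{n,q} = (s_{n-q} ⋯ s_1)(s_{n-q+1} ⋯ s_2) ⋯ (s_{n-1} ⋯ s_q)`,
with `p_{n,0} = p_{n,n} = e`. -/
def p (n q : ℕ) : Equiv.Perm ℤ :=
  ((List.range q).map (fun m => desc (1 + m) (n - q + m))).prod

/-- `Π_{n,q} = (s_{n-q-1} ⋯ s_1) · t · p_{n,q}`. -/
def PiElt (n q : ℕ) : Equiv.Perm ℤ := desc 1 (n - q - 1) * t * p n q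

/-- `Υ(w) = {z ∈ Área_n : Des(z) = Des(w)}`. -/
def Ups (n : ℕ) (w : Equiv.Perm ℤ) : Set (Equiv.Perm ℤ) :=
  {z | z ∈ Area n ∧ Des n z = Des n w}

/-- The parabolic subgroup `W_J = ⟨s_1, …, s_{n-1}⟩`. -/
def WJ (n : ℕ) : Set (Equiv.Perm ℤ) :=
  ↑(Subgroup.closure {g | ∃ i : ℕ, 1 ≤ i ∧ i ≤ n - 1 ∧ g = s (i : ℤ)})

/-- The parabolic subgroup `W_K = ⟨t, s_1, …, s_{n-2}⟩`. -/
def WK (n : ℕ) : Set (Equiv.Perm ℤ) :=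
  ↑(Subgroup.closure (insert t {g | ∃ i : ℕ, 1 ≤ i ∧ i ≤ n - 2 ∧ g = s (i : ℤ)}))

/-- Knuth relation of type `I_k` : `w' = w · s_{i+1}` when
`w(i+1) < w(i) < w(i+2)` or `w(i+2) < w(i) < w(i+1)`. -/
def stepI (k : ℕ) (w w' : Equiv.Perm ℤ) : Prop :=
  ∃ i : ℤ, 1 ≤ i ∧ i ≤ (k : ℤ) - 2 ∧
    ((w (i + 1) < w i ∧ w i < w (i + 2)) ∨ (w (i + 2) < w i ∧ w i < w (i + 1))) ∧
    w' = w * s (i + 1)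

/-- Knuth relation of type `II_k` : `w' = w · s_i` when
`w(i+1) < w(i+2) < w(i)` or `w(i) < w(i+2) < w(i+1)`. -/
def stepII (k : ℕ) (w w' : Equiv.Perm ℤ) : Prop :=
  ∃ i : ℤ, 1 ≤ i ∧ i ≤ (k : ℤ) - 2 ∧
    ((w (i + 1) < w (i + 2) ∧ w (i + 2) < w i) ∨ (w i < w (i + 2) ∧ w (i + 2) < w (i + 1))) ∧
    w' = w * s i

/-- Knuth relation of type `III_k` : `w' = w · s_i` when `w(i)` and `w(i+1)` have
opposite signs. -/
def stepIII (k : ℕ) (w w' : Equiv.Perm ℤ) : Prop :=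
  ∃ i : ℤ, 1 ≤ i ∧ i ≤ (k : ℤ) - 1 ∧
    ((w i < 0 ∧ 0 < w (i + 1)) ∨ (w (i + 1) < 0 ∧ 0 < w i)) ∧
    w' = w * s i


/-! ### Auxiliary development -/

section Aux

open Equiv Finset

lemma t_eval (x : ℤ) : t x = if x = 1 then -1 else if x = -1 then 1 else x := by
  simp only [t, Equiv.swap_apply_def]

lemma s_eval (i : ℤ) (hi : 1 ≤ i) (x : ℤ) :
    s i x = if x = i then i + 1 else if x = i + 1 then i
      else if x = -i then -(i + 1) else if x = -(i + 1) then -i else x := by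
  simp only [s, Equiv.Perm.mul_apply, Equiv.swap_apply_def]
  split_ifs <;> first | rfl | omega

lemma W_one (n : ℕ) : (1 : Equiv.Perm ℤ) ∈ W n :=
  ⟨fun i => rfl, fun i _ => rfl⟩

lemma W_mul {n : ℕ} {u v : Equiv.Perm ℤ} (hu : u ∈ W n) (hv : v ∈ W n) : u * v ∈ W n := by
  obtain ⟨hu1, hu2⟩ := hu; obtain ⟨hv1, hv2⟩ := hv
  refine ⟨fun i => ?_, fun i hi => ?_⟩
  · simp only [Equiv.Perm.mul_apply, hv1, hu1]
  · simp only [Equiv.Perm.mul_apply, hv2 i hi, hu2 i hi]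

lemma W_inv {n : ℕ} {u : Equiv.Perm ℤ} (hu : u ∈ W n) : u⁻¹ ∈ W n := by
  obtain ⟨h1, h2⟩ := hu
  constructor
  · intro i
    apply u.injective
    rw [show ∀ x, u (u⁻¹ x) = x from fun x => u.apply_symm_apply x, show (u : Equiv.Perm ℤ) (-(u⁻¹ i)) = -(u (u⁻¹ i)) from h1 _,
      show ∀ x, u (u⁻¹ x) = x from fun x => u.apply_symm_apply x]
  · intro i hi
    have h3 := h2 i hi
    nth_rewrite 1 [← h3]
    exact u.symm_apply_apply i

lemma W_bound {n : ℕ} {u : Equiv.Perm ℤ} (hu : u ∈ W n) {x : ℤ}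
    (hx1 : -(n : ℤ) ≤ x) (hx2 : x ≤ n) : -(n : ℤ) ≤ u x ∧ u x ≤ n := by
  by_contra h
  have habs : (n : ℤ) < |u x| := by
    rcases abs_cases (u x) with ⟨h1, h2⟩ | ⟨h1, h2⟩ <;> omega
  have h2 := hu.2 (u x) habs
  have := u.injective h2
  rcases abs_cases (u x) with ⟨h1, _⟩ | ⟨h1, _⟩ <;> omega

lemma W_ne_zero {n : ℕ} {u : Equiv.Perm ℤ} (hu : u ∈ W n) {x : ℤ} (hx : x ≠ 0) : u x ≠ 0 := by
  intro h
  have h1 : u (-x) = u x := by rw [hu.1 x, h, neg_zero]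
  have := u.injective h1
  omega

/-- The set of "positive roots" for `B_n`, as pairs. -/
noncomputable def DD (n : ℕ) : Finset (ℤ × ℤ) :=
  (Finset.Icc (-(n : ℤ)) n ×ˢ Finset.Icc 1 (n : ℤ)).filter
    fun pr => pr.1 ≠ 0 ∧ -pr.2 ≤ pr.1 ∧ pr.1 < pr.2

lemma mem_DD {n : ℕ} {pr : ℤ × ℤ} :
    pr ∈ DD n ↔ pr.1 ≠ 0 ∧ 1 ≤ pr.2 ∧ pr.2 ≤ n ∧ -pr.2 ≤ pr.1 ∧ pr.1 < pr.2 := by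
  simp only [DD, Finset.mem_filter, Finset.mem_product, Finset.mem_Icc]
  omega

/-- Normal form of a pair (representative in `DD`). -/
def nrm (pr : ℤ × ℤ) : ℤ × ℤ :=
  if 0 < pr.1 + pr.2 then (if pr.1 < pr.2 then pr else (pr.2, pr.1))
  else if pr.1 + pr.2 < 0 then (if pr.1 < pr.2 then (-pr.2, -pr.1) else (-pr.1, -pr.2))
  else (if 0 < pr.2 then pr else (pr.2, pr.1))

/-- The (normalized) action of a permutation on pairs. -/
def actP (w : Equiv.Perm ℤ) (pr : ℤ × ℤ) : ℤ × ℤ := nrm (w pr.1, w pr.2)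

/-- The `B_n`-length statistic: number of inversions. -/
noncomputable def LL (n : ℕ) (w : Equiv.Perm ℤ) : ℕ :=
  ∑ pr ∈ DD n, if w pr.2 < w pr.1 then 1 else 0

lemma nrm_cases (a b : ℤ) :
    nrm (a, b) = (a, b) ∨ nrm (a, b) = (b, a) ∨ nrm (a, b) = (-b, -a) ∨ nrm (a, b) = (-a, -b) := by
  unfold nrm
  split_ifs <;> simp

lemma nrm_mem {n : ℕ} {a b : ℤ} (h0a : a ≠ 0) (h0b : b ≠ 0) (hab : a ≠ b)
    (ha1 : -(n : ℤ) ≤ a) (ha2 : a ≤ n) (hb1 : -(n : ℤ) ≤ b) (hb2 : b ≤ n) :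
    nrm (a, b) ∈ DD n := by
  unfold nrm
  split_ifs <;> rw [mem_DD] <;> dsimp only <;> omega

lemma nrm_id {n : ℕ} {pr : ℤ × ℤ} (h : pr ∈ DD n) : nrm pr = pr := by
  rw [mem_DD] at h
  unfold nrm
  split_ifs <;> first | rfl | (exfalso; omega)

lemma nrm_swap (a b : ℤ) : nrm (b, a) = nrm (a, b) := by
  unfold nrm
  split_ifs <;> simp only [Prod.mk.injEq] <;> omega

lemma nrm_neg (a b : ℤ) : nrm (-a, -b) = nrm (a, b) := by
  unfold nrm
  split_ifs <;> simp only [Prod.mk.injEq] <;> omega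

end Aux
section Aux2

open Equiv Finset

lemma actP_mem {n : ℕ} {w : Equiv.Perm ℤ} (hw : w ∈ W n) {pr : ℤ × ℤ}
    (hpr : pr ∈ DD n) : actP w pr ∈ DD n := by
  rw [mem_DD] at hpr
  obtain ⟨h0, hb1, hb2, hab, hlt⟩ := hpr
  have hb0 : pr.2 ≠ 0 := by omega
  have h1 := W_bound hw (x := pr.1) (by omega) (by omega)
  have h2 := W_bound hw (x := pr.2) (by omega) (by omega)
  exact nrm_mem (W_ne_zero hw h0) (W_ne_zero hw hb0)
    (fun h => by have := w.injective h; omega) h1.1 h1.2 h2.1 h2.2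

lemma actP_actP {n : ℕ} {w : Equiv.Perm ℤ} (hw : w ∈ W n) {pr : ℤ × ℤ}
    (hpr : pr ∈ DD n) : actP w⁻¹ (actP w pr) = pr := by
  have hodd : ∀ j : ℤ, w⁻¹ (-j) = -(w⁻¹ j) := (W_inv hw).1
  rcases nrm_cases (w pr.1) (w pr.2) with h | h | h | h <;>
    · show nrm (w⁻¹ (nrm (w pr.1, w pr.2)).1, w⁻¹ (nrm (w pr.1, w pr.2)).2) = pr
      rw [h]
      simp only [hodd, show ∀ x, w⁻¹ (w x) = x from fun x => w.symm_apply_apply x]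
      first
        | rw [show (pr.1, pr.2) = pr from rfl, nrm_id hpr]
        | rw [nrm_swap, show (pr.1, pr.2) = pr from rfl, nrm_id hpr]
        | rw [nrm_neg, show (pr.1, pr.2) = pr from rfl, nrm_id hpr]
        | rw [nrm_neg, nrm_swap, show (pr.1, pr.2) = pr from rfl, nrm_id hpr]

lemma sum_actP {n : ℕ} {w : Equiv.Perm ℤ} (hw : w ∈ W n) (f : ℤ × ℤ → ℕ) :
    ∑ pr ∈ DD n, f (actP w pr) = ∑ pr ∈ DD n, f pr := by
  apply Finset.sum_nbij' (i := fun pr => actP w pr) (j := fun pr => actP w⁻¹ pr)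
  · intro a ha; exact actP_mem hw ha
  · intro a ha; exact actP_mem (W_inv hw) ha
  · intro a ha; exact actP_actP hw ha
  · intro a ha
    have := actP_actP (W_inv hw) ha
    rwa [inv_inv] at this
  · intro a ha; rfl

lemma flip_mul {n : ℕ} {u w : Equiv.Perm ℤ} (hu : u ∈ W n) (hw : w ∈ W n) {pr : ℤ × ℤ}
    (hpr : pr ∈ DD n) :
    ((u * w) pr.2 < (u * w) pr.1) ↔
      ¬ ((u (actP w pr).2 < u (actP w pr).1) ↔ (w pr.2 < w pr.1)) := by
  rw [mem_DD] at hpr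
  have hne : w pr.1 ≠ w pr.2 := fun h => by have := w.injective h; omega
  have hneu : u (w pr.1) ≠ u (w pr.2) := fun h => hne (u.injective h)
  simp only [Equiv.Perm.mul_apply, actP, nrm]
  split_ifs <;>
    · dsimp only
      try simp only [hu.1]
      omega

lemma cocycle {n : ℕ} {u w : Equiv.Perm ℤ} (hu : u ∈ W n) (hw : w ∈ W n) :
    LL n (u * w) + 2 * (∑ pr ∈ DD n,
        if (w pr.2 < w pr.1) ∧ (u (actP w pr).2 < u (actP w pr).1) then 1 else 0)
      = LL n u + LL n w := by
  unfold LL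
  rw [← sum_actP hw (fun pr => if u pr.2 < u pr.1 then 1 else 0)]
  rw [Finset.mul_sum, ← Finset.sum_add_distrib, ← Finset.sum_add_distrib]
  apply Finset.sum_congr rfl
  intro pr hpr
  have h := flip_mul hu hw hpr
  simp only [Equiv.Perm.mul_apply] at h ⊢
  by_cases h1 : w pr.2 < w pr.1 <;> by_cases h2 : u (actP w pr).2 < u (actP w pr).1 <;>
    by_cases h3 : u (w pr.2) < u (w pr.1) <;>
    simp only [h1, h2, h3, ite_true, ite_false, and_self, and_true, true_and, and_false,
      false_and, iff_true, iff_false, not_true, not_false_eq_true, true_iff, false_iff,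
      iff_self, not_true_eq_false] at h ⊢ <;> omega

lemma LL_mul_le {n : ℕ} {u w : Equiv.Perm ℤ} (hu : u ∈ W n) (hw : w ∈ W n) :
    LL n (u * w) ≤ LL n u + LL n w := by
  have := cocycle hu hw
  omega

lemma LL_mul_eq {n : ℕ} {u w : Equiv.Perm ℤ} (hu : u ∈ W n) (hw : w ∈ W n)
    (hC : ∀ pr ∈ DD n, (w pr.2 < w pr.1) → ¬ (u (actP w pr).2 < u (actP w pr).1)) :
    LL n (u * w) = LL n u + LL n w := by
  have h := cocycle hu hw
  have hz : (∑ pr ∈ DD n,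
      if (w pr.2 < w pr.1) ∧ (u (actP w pr).2 < u (actP w pr).1) then 1 else 0) = 0 := by
    apply Finset.sum_eq_zero
    intro pr hpr
    have := hC pr hpr
    rw [if_neg]
    tauto
  omega

lemma LL_flip_sub {n : ℕ} {u w : Equiv.Perm ℤ} (hu : u ∈ W n) (hw : w ∈ W n)
    (h : LL n (u * w) = LL n u + LL n w) :
    ∀ pr ∈ DD n, (w pr.2 < w pr.1) → ((u * w) pr.2 < (u * w) pr.1) := by
  have hc := cocycle hu hw
  have hz : (∑ pr ∈ DD n,
      if (w pr.2 < w pr.1) ∧ (u (actP w pr).2 < u (actP w pr).1) then 1 else 0) = 0 := by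
    omega
  rw [Finset.sum_eq_zero_iff] at hz
  intro pr hpr hf
  have h1 := hz pr hpr
  have h2 : ¬ ((w pr.2 < w pr.1) ∧ (u (actP w pr).2 < u (actP w pr).1)) := by
    by_contra hcon
    rw [if_pos hcon] at h1
    omega
  have h3 := flip_mul hu hw hpr
  tauto

lemma flip_inv {n : ℕ} {w : Equiv.Perm ℤ} (hw : w ∈ W n) {pr : ℤ × ℤ} (hpr : pr ∈ DD n) :
    (w⁻¹ pr.2 < w⁻¹ pr.1) ↔ (w (actP w⁻¹ pr).2 < w (actP w⁻¹ pr).1) := by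
  have h := flip_mul hw (W_inv hw) hpr
  rw [mul_inv_cancel] at h
  have hmem := mem_DD.mp hpr
  simp only [Equiv.Perm.one_apply] at h
  constructor
  · intro h1
    by_contra h2
    exact absurd (h.mpr (by tauto)) (by omega)
  · intro h1
    by_contra h2
    exact absurd (h.mpr (by tauto)) (by omega)

lemma LL_inv {n : ℕ} {w : Equiv.Perm ℤ} (hw : w ∈ W n) : LL n w⁻¹ = LL n w := by
  unfold LL
  rw [← sum_actP (W_inv hw) (fun pr => if w pr.2 < w pr.1 then 1 else 0)]
  apply Finset.sum_congr rfl
  intro pr hpr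
  rw [if_congr (flip_inv hw hpr) rfl rfl]

end Aux2
section Aux3

open Equiv Finset

lemma t_mem {n : ℕ} (hn : 1 ≤ n) : t ∈ W n := by
  constructor
  · intro i
    simp only [t_eval]
    split_ifs <;> omega
  · intro i hi
    have hi' : i < -(n : ℤ) ∨ (n : ℤ) < i := by
      rcases abs_cases i with ⟨h1, _⟩ | ⟨h1, _⟩ <;> omega
    rw [t_eval]
    split_ifs <;> omega

lemma s_mem {n : ℕ} {i : ℤ} (h1 : 1 ≤ i) (h2 : i + 1 ≤ n) : s i ∈ W n := by
  constructor
  · intro x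
    simp only [s_eval i h1]
    split_ifs <;> omega
  · intro x hx
    have hx' : x < -(n : ℤ) ∨ (n : ℤ) < x := by
      rcases abs_cases x with ⟨ha, _⟩ | ⟨ha, _⟩ <;> omega
    rw [s_eval i h1]
    split_ifs <;> omega

lemma gens_mem_W {n : ℕ} (hn : 1 ≤ n) {g : Equiv.Perm ℤ} (hg : g ∈ gens n) : g ∈ W n := by
  rcases hg with rfl | ⟨i, hi1, hi2, rfl⟩
  · exact t_mem hn
  · have hn2 : 2 ≤ n := by omega
    exact s_mem (by exact_mod_cast hi1) (by omega)

lemma prod_mem_W {n : ℕ} (hn : 1 ≤ n) (l : List (Equiv.Perm ℤ))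
    (h : ∀ g ∈ l, g ∈ gens n) : l.prod ∈ W n := by
  induction l with
  | nil => exact W_one n
  | cons g l ih =>
    rw [List.prod_cons]
    exact W_mul (gens_mem_W hn (h g (by simp)))
      (ih fun g' hg' => h g' (by simp [hg']))

lemma flip_t_iff {n : ℕ} {pr : ℤ × ℤ} (hpr : pr ∈ DD n) :
    (t pr.2 < t pr.1) ↔ pr = ((-1 : ℤ), (1 : ℤ)) := by
  rw [mem_DD] at hpr
  rw [Prod.ext_iff]
  simp only [t_eval]
  split_ifs <;> omega

lemma flip_s_iff {n : ℕ} {i : ℤ} (h1 : 1 ≤ i) {pr : ℤ × ℤ} (hpr : pr ∈ DD n) :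
    (s i pr.2 < s i pr.1) ↔ pr = ((i : ℤ), i + 1) := by
  rw [mem_DD] at hpr
  rw [Prod.ext_iff]
  simp only [s_eval i h1]
  split_ifs <;> omega

lemma LL_of_unique {n : ℕ} {g : Equiv.Perm ℤ} {pr₀ : ℤ × ℤ} (hmem : pr₀ ∈ DD n)
    (hchar : ∀ pr ∈ DD n, (g pr.2 < g pr.1) ↔ pr = pr₀) : LL n g = 1 := by
  have h2 : (∑ pr ∈ DD n, if g pr.2 < g pr.1 then 1 else 0)
      = ∑ pr ∈ DD n, if pr = pr₀ then 1 else 0 :=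
    Finset.sum_congr rfl fun pr hpr => if_congr (hchar pr hpr) rfl rfl
  rw [LL, h2, Finset.sum_ite_eq' (DD n) pr₀ (fun _ => 1), if_pos hmem]

lemma LL_t {n : ℕ} (hn : 1 ≤ n) : LL n t = 1 :=
  LL_of_unique (by rw [mem_DD]; constructor <;> omega) fun pr hpr => flip_t_iff hpr

lemma LL_s {n : ℕ} {i : ℤ} (h1 : 1 ≤ i) (h2 : i + 1 ≤ n) : LL n (s i) = 1 :=
  LL_of_unique (pr₀ := (i, i + 1)) (by rw [mem_DD]; dsimp only; omega)
    fun pr hpr => flip_s_iff h1 hpr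

lemma LL_gen {n : ℕ} (hn : 1 ≤ n) {g : Equiv.Perm ℤ} (hg : g ∈ gens n) : LL n g = 1 := by
  rcases hg with rfl | ⟨i, hi1, hi2, rfl⟩
  · exact LL_t hn
  · exact LL_s (by exact_mod_cast hi1) (by omega)

lemma LL_one (n : ℕ) : LL n 1 = 0 := by
  unfold LL
  apply Finset.sum_eq_zero
  intro pr hpr
  rw [mem_DD] at hpr
  simp only [Equiv.Perm.one_apply]
  exact if_neg (by omega)

lemma LL_prod_le {n : ℕ} (hn : 1 ≤ n) (l : List (Equiv.Perm ℤ))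
    (h : ∀ g ∈ l, g ∈ gens n) : LL n l.prod ≤ l.length := by
  induction l with
  | nil => simp [LL_one]
  | cons g l ih =>
    rw [List.prod_cons, List.length_cons]
    have h1 := LL_mul_le (gens_mem_W hn (h g (by simp)))
      (prod_mem_W hn l fun g' hg' => h g' (by simp [hg']))
    have h2 := LL_gen hn (h g (by simp))
    have h3 := ih fun g' hg' => h g' (by simp [hg'])
    omega

lemma t_sq : t * t = 1 := by
  rw [t, Equiv.swap_mul_self]

lemma s_sq (i : ℤ) (h1 : 1 ≤ i) : s i * s i = 1 := by
  apply Equiv.ext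
  intro x
  simp only [Equiv.Perm.mul_apply, Equiv.Perm.one_apply, s_eval i h1]
  split_ifs <;> omega

end Aux3
section Aux4

open Equiv Finset

lemma sum_ind_unique {n : ℕ} {P : ℤ × ℤ → Prop} [DecidablePred P] {pr₀ : ℤ × ℤ}
    (hmem : pr₀ ∈ DD n) (hchar : ∀ pr ∈ DD n, P pr ↔ pr = pr₀) :
    (∑ pr ∈ DD n, if P pr then 1 else 0) = 1 := by
  have h2 : (∑ pr ∈ DD n, if P pr then 1 else 0)
      = ∑ pr ∈ DD n, if pr = pr₀ then 1 else 0 :=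
    Finset.sum_congr rfl fun pr hpr => if_congr (hchar pr hpr) rfl rfl
  rw [h2, Finset.sum_ite_eq' (DD n) pr₀ (fun _ => 1), if_pos hmem]

lemma increasing_eq_one {n : ℕ} {w : Equiv.Perm ℤ} (hw : w ∈ W n)
    (hd : ∀ i : ℤ, 1 ≤ i → i + 1 ≤ (n : ℤ) → w i ≤ w (i + 1)) (ht : 0 ≤ w 1) :
    w = 1 := by
  have hstrict : ∀ i : ℤ, 1 ≤ i → i + 1 ≤ (n : ℤ) → w i < w (i + 1) := by
    intro i h1 h2
    have h3 := hd i h1 h2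
    have h4 : w i ≠ w (i + 1) := fun h => by have := w.injective h; omega
    omega
  have claimA : ∀ k : ℕ, ∀ i : ℤ, 1 ≤ i → i + k ≤ (n : ℤ) → w i + k ≤ w (i + k) := by
    intro k
    induction k with
    | zero => intro i h1 h2; simp
    | succ k ih =>
      intro i h1 h2
      have hk := ih i h1 (by push_cast at h2 ⊢; omega)
      have hs := hstrict (i + k) (by omega) (by push_cast at h2 ⊢; omega)
      push_cast
      push_cast at hk hs
      have : i + (k + 1 : ℤ) = (i + k) + 1 := by ring
      rw [this]
      omega
  have claimB : ∀ k : ℕ, (k : ℤ) < n → w ((n : ℤ) - k) ≤ (n : ℤ) - k := by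
    intro k
    induction k with
    | zero =>
      intro hk
      have := W_bound hw (x := (n : ℤ)) (by omega) (by omega)
      simp only [Nat.cast_zero, sub_zero]
      omega
    | succ k ih =>
      intro hk
      push_cast at hk ⊢
      have h1 := ih (by omega)
      have hs := hstrict ((n : ℤ) - k - 1) (by omega) (by omega)
      have he : (n : ℤ) - k - 1 + 1 = (n : ℤ) - k := by ring
      rw [he] at hs
      have he2 : (n : ℤ) - ((k : ℤ) + 1) = (n : ℤ) - k - 1 := by ring
      rw [he2]
      omega
  have hfix : ∀ i : ℤ, 1 ≤ i → i ≤ (n : ℤ) → w i = i := by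
    intro i h1 h2
    have hA := claimA (i - 1).toNat 1 (by omega) (by omega)
    have hB := claimB ((n : ℤ) - i).toNat (by omega)
    have e1 : ((1 : ℤ) + ((i - 1).toNat : ℤ)) = i := by omega
    have e2 : ((n : ℤ) - (((n : ℤ) - i).toNat : ℤ)) = i := by omega
    rw [e1] at hA
    rw [e2] at hB
    have hw1 : w 1 ≠ 0 := W_ne_zero hw (by omega)
    omega
  apply Equiv.ext
  intro x
  simp only [Equiv.Perm.one_apply]
  rcases lt_trichotomy x 0 with hx | hx | hx
  · by_cases hxn : -(n : ℤ) ≤ x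
    · have h1 := hw.1 (-x)
      rw [neg_neg] at h1
      rw [h1, hfix (-x) (by omega) (by omega)]
      ring
    · exact hw.2 x (by rcases abs_cases x with ⟨h1, _⟩ | ⟨h1, _⟩ <;> omega)
  · subst hx
    have h1 := hw.1 0
    rw [neg_zero] at h1
    omega
  · by_cases hxn : x ≤ (n : ℤ)
    · exact hfix x (by omega) hxn
    · exact hw.2 x (by rcases abs_cases x with ⟨h1, _⟩ | ⟨h1, _⟩ <;> omega)

lemma exists_descent {n : ℕ} (hn : 1 ≤ n) {w : Equiv.Perm ℤ} (hw : w ∈ W n) (hne : w ≠ 1) :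
    ∃ g ∈ gens n, g * g = 1 ∧ LL n (w * g) + 1 = LL n w := by
  by_cases hd : ∃ i : ℤ, 1 ≤ i ∧ i + 1 ≤ (n : ℤ) ∧ w (i + 1) < w i
  · obtain ⟨i, hi1, hi2, hdesc⟩ := hd
    have hsW : s i ∈ W n := s_mem hi1 hi2
    have hsi : s i i = i + 1 := by rw [s_eval i hi1]; split_ifs <;> omega
    have hsi1 : s i (i + 1) = i := by rw [s_eval i hi1]; split_ifs <;> omega
    have hact : actP (s i) ((i : ℤ), i + 1) = (i, i + 1) := by
      show nrm (s i i, s i (i + 1)) = (i, i + 1)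
      rw [hsi, hsi1]
      unfold nrm
      split_ifs <;> simp only [Prod.mk.injEq] <;> omega
    have hp₀ : ((i : ℤ), i + 1) ∈ DD n := by rw [mem_DD]; dsimp only; omega
    have hC : (∑ pr ∈ DD n, if (s i pr.2 < s i pr.1) ∧
        (w (actP (s i) pr).2 < w (actP (s i) pr).1) then 1 else 0) = 1 := by
      apply sum_ind_unique hp₀
      intro pr hpr
      constructor
      · rintro ⟨h1, _⟩
        exact (flip_s_iff hi1 hpr).mp h1
      · rintro rfl
        refine ⟨(flip_s_iff hi1 hp₀).mpr rfl, ?_⟩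
        rw [hact]
        exact hdesc
    have hco := cocycle hw hsW
    rw [hC, LL_s hi1 hi2] at hco
    refine ⟨s i, ?_, s_sq i hi1, by omega⟩
    right
    exact ⟨i.toNat, by omega, by omega, by rw [Int.toNat_of_nonneg (by omega)]⟩
  · by_cases ht : w 1 < 0
    · have htW : t ∈ W n := t_mem hn
      have ht1 : t (1 : ℤ) = -1 := by rw [t_eval]; norm_num
      have ht2 : t (-1 : ℤ) = 1 := by rw [t_eval]; norm_num
      have hact : actP t ((-1 : ℤ), (1 : ℤ)) = (-1, 1) := by
        show nrm (t (-1), t 1) = (-1, 1)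
        rw [ht1, ht2]
        unfold nrm
        split_ifs <;> simp only [Prod.mk.injEq] <;> omega
      have hp₀ : ((-1 : ℤ), (1 : ℤ)) ∈ DD n := by
        rw [mem_DD]
        refine ⟨by norm_num, by norm_num, ?_, by norm_num, by norm_num⟩
        show (1 : ℤ) ≤ (n : ℤ)
        exact_mod_cast hn
      have hC : (∑ pr ∈ DD n, if (t pr.2 < t pr.1) ∧
          (w (actP t pr).2 < w (actP t pr).1) then 1 else 0) = 1 := by
        apply sum_ind_unique hp₀
        intro pr hpr
        constructor
        · rintro ⟨h1, _⟩
          exact (flip_t_iff hpr).mp h1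
        · rintro rfl
          refine ⟨(flip_t_iff hp₀).mpr rfl, ?_⟩
          rw [hact]
          show w 1 < w (-1)
          rw [hw.1 1]
          omega
      have hco := cocycle hw htW
      rw [hC, LL_t hn] at hco
      exact ⟨t, Or.inl rfl, t_sq, by omega⟩
    · exfalso
      push_neg at hd ht
      exact hne (increasing_eq_one hw (fun i h1 h2 => hd i h1 h2) ht)

lemma exists_word {n : ℕ} (hn : 1 ≤ n) :
    ∀ N : ℕ, ∀ w ∈ W n, LL n w = N →
      ∃ l : List (Equiv.Perm ℤ), (∀ g ∈ l, g ∈ gens n) ∧ l.prod = w ∧ l.length = LL n w := by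
  intro N
  induction N using Nat.strong_induction_on with
  | _ N ih =>
    intro w hw hLL
    by_cases hne : w = 1
    · subst hne
      exact ⟨[], by simp, by simp, by simp [LL_one]⟩
    · obtain ⟨g, hg, hgg, hlen⟩ := exists_descent hn hw hne
      have hgW := gens_mem_W hn hg
      have hwgW := W_mul hw hgW
      obtain ⟨l, hl1, hl2, hl3⟩ := ih (LL n (w * g)) (by omega) (w * g) hwgW rfl
      refine ⟨l ++ [g], ?_, ?_, ?_⟩
      · intro g' hg'
        rcases List.mem_append.mp hg' with h | h
        · exact hl1 g' h
        · rw [List.mem_singleton.mp h]; exact hg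
      · rw [List.prod_append, List.prod_singleton, hl2, mul_assoc, hgg, mul_one]
      · rw [List.length_append, List.length_singleton, hl3]
        omega

lemma len_eq_LL {n : ℕ} (hn : 1 ≤ n) {w : Equiv.Perm ℤ} (hw : w ∈ W n) :
    len n w = LL n w := by
  obtain ⟨l, hg, hprod, hlen⟩ := exists_word hn (LL n w) w hw rfl
  have hne : {k | ∃ l : List (Equiv.Perm ℤ),
      l.length = k ∧ (∀ g ∈ l, g ∈ gens n) ∧ l.prod = w}.Nonempty :=
    ⟨LL n w, l, hlen, hg, hprod⟩
  have hub : len n w ≤ LL n w := Nat.sInf_le ⟨l, hlen, hg, hprod⟩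
  have hmem := Nat.sInf_mem hne
  obtain ⟨l', hl'len, hl'g, hl'prod⟩ := hmem
  have hlb : LL n w ≤ len n w := by
    have h5 := LL_prod_le hn l' hl'g
    rw [hl'prod] at h5
    unfold len
    omega
  omega

end Aux4
section Aux5

open Equiv Finset

lemma flatMap_pure (l : List ℕ) :
    (l.flatMap fun a : ℕ => [((a : ℕ) : ℤ)]) = l.map (fun a : ℕ => (a : ℤ)) := by
  induction l with
  | nil => rfl
  | cons b l ih => simp [List.flatMap_cons, ih]

lemma desc_eq (i j : ℕ) :
    desc i j = ((List.range (j + 1 - i)).map (fun k : ℕ => s ((j : ℤ) - (k : ℕ)))).prod := by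
  unfold desc
  rw [show (do let a ← List.range (j + 1 - i); pure ((a : ℕ) : ℤ) : List ℤ)
      = (List.range (j + 1 - i)).flatMap (fun a : ℕ => [((a : ℕ) : ℤ)]) from rfl,
    flatMap_pure, List.map_map]
  rfl

lemma desc_succ {i j : ℕ} (h : i ≤ j) : desc i j = desc (i + 1) j * s (i : ℤ) := by
  rw [desc_eq, desc_eq]
  rw [show j + 1 - i = (j + 1 - (i + 1)) + 1 by omega, List.range_succ, List.map_append,
    List.prod_append]
  have e : (j : ℤ) - ((j + 1 - (i + 1) : ℕ) : ℤ) = (i : ℤ) := by omega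
  simp only [List.map_cons, List.map_nil, List.prod_cons, List.prod_nil, mul_one, e]

set_option maxHeartbeats 1600000 in
lemma desc_eval : ∀ m i j : ℕ, 1 ≤ i → i + m = j + 1 → ∀ x : ℤ,
    desc i j x = if x = (i : ℤ) then (j : ℤ) + 1
      else if (i : ℤ) < x ∧ x ≤ (j : ℤ) + 1 then x - 1
      else if x = -(i : ℤ) then -((j : ℤ) + 1)
      else if -((j : ℤ) + 1) ≤ x ∧ x < -(i : ℤ) then x + 1 else x := by
  intro m
  induction m with
  | zero =>
    intro i j h1 h2 x
    rw [desc_eq, show j + 1 - i = 0 by omega]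
    simp only [List.range_zero, List.map_nil, List.prod_nil, Equiv.Perm.one_apply]
    split_ifs <;> omega
  | succ m ih =>
    intro i j h1 h2 x
    rw [desc_succ (by omega), Equiv.Perm.mul_apply,
      ih (i + 1) j (by omega) (by omega), s_eval (i : ℤ) (by exact_mod_cast h1)]
    push_cast
    split_ifs <;> omega

/-- Auxiliary form of `p`. -/
def pp (r q : ℕ) : Equiv.Perm ℤ :=
  ((List.range q).map (fun m => desc (1 + m) (r + m))).prod

lemma pp_succ (r q : ℕ) : pp r (q + 1) = pp r q * desc (1 + q) (r + q) := by
  unfold pp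
  rw [List.range_succ, List.map_append, List.prod_append]
  simp

set_option maxHeartbeats 1600000 in
lemma pp_eval : ∀ q r : ℕ, ∀ x : ℤ,
    pp r q x = if 1 ≤ x ∧ x ≤ (q : ℤ) then x + r
      else if (q : ℤ) < x ∧ x ≤ (q : ℤ) + r then x - q
      else if -(q : ℤ) ≤ x ∧ x ≤ -1 then x - r
      else if -((q : ℤ) + r) ≤ x ∧ x < -(q : ℤ) then x + q else x := by
  intro q
  induction q with
  | zero =>
    intro r x
    unfold pp
    simp only [List.range_zero, List.map_nil, List.prod_nil, Equiv.Perm.one_apply]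
    split_ifs <;> omega
  | succ q ih =>
    intro r x
    rw [pp_succ, Equiv.Perm.mul_apply,
      desc_eval r (1 + q) (r + q) (by omega) (by omega), ih r]
    push_cast
    split_ifs <;> omega

lemma aw_succ (q : ℕ) : aw (q + 1) = aw q * (desc 1 q * t) := by
  unfold aw
  rw [List.range_succ, List.map_append, List.prod_append]
  simp

set_option maxHeartbeats 1600000 in
lemma aw_eval : ∀ q : ℕ, ∀ x : ℤ,
    aw q x = if 1 ≤ x ∧ x ≤ (q : ℤ) then x - ((q : ℤ) + 1)
      else if -(q : ℤ) ≤ x ∧ x ≤ -1 then x + ((q : ℤ) + 1) else x := by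
  intro q
  induction q with
  | zero =>
    intro x
    unfold aw
    simp only [List.range_zero, List.map_nil, List.prod_nil, Equiv.Perm.one_apply]
    split_ifs <;> omega
  | succ q ih =>
    intro x
    rw [aw_succ, Equiv.Perm.mul_apply, ih, Equiv.Perm.mul_apply,
      desc_eval q 1 q (by omega) (by omega), t_eval]
    push_cast
    split_ifs <;> first | omega | (exfalso; assumption)

/-- Auxiliary form of `bw`. -/
def bb (q m : ℕ) : Equiv.Perm ℤ :=
  ((List.range m).map (fun k => desc (q + 1) (q + 1 + k))).prod

lemma bb_succ (q m : ℕ) : bb q (m + 1) = bb q m * desc (q + 1) (q + 1 + m) := by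
  unfold bb
  rw [List.range_succ, List.map_append, List.prod_append]
  simp

set_option maxHeartbeats 1600000 in
lemma bb_eval : ∀ m q : ℕ, ∀ x : ℤ,
    bb q m x = if (q : ℤ) + 1 ≤ x ∧ x ≤ (q : ℤ) + 1 + m then 2 * q + 2 + m - x
      else if -((q : ℤ) + 1 + m) ≤ x ∧ x ≤ -((q : ℤ) + 1) then -(2 * (q : ℤ) + 2 + m) - x
      else x := by
  intro m
  induction m with
  | zero =>
    intro q x
    unfold bb
    simp only [List.range_zero, List.map_nil, List.prod_nil, Equiv.Perm.one_apply]
    split_ifs <;> omega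
  | succ m ih =>
    intro q x
    rw [bb_succ, Equiv.Perm.mul_apply,
      desc_eval (m + 1) (q + 1) (q + 1 + m) (by omega) (by omega), ih q]
    push_cast
    split_ifs <;> omega

set_option maxHeartbeats 1600000 in
lemma p_eval {n q : ℕ} (hq : q ≤ n) (x : ℤ) :
    p n q x = if 1 ≤ x ∧ x ≤ (q : ℤ) then x + n - q
      else if (q : ℤ) < x ∧ x ≤ (n : ℤ) then x - q
      else if -(q : ℤ) ≤ x ∧ x ≤ -1 then x - n + q
      else if -(n : ℤ) ≤ x ∧ x < -(q : ℤ) then x + q else x := by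
  rw [show p n q = pp (n - q) q from rfl, pp_eval]
  split_ifs <;> omega

set_option maxHeartbeats 1600000 in
lemma sig_eval {n q : ℕ} (hq : q ≤ n) (x : ℤ) :
    sig n q x = if 1 ≤ x ∧ x ≤ (q : ℤ) then x - ((q : ℤ) + 1)
      else if (q : ℤ) < x ∧ x ≤ (n : ℤ) then (n : ℤ) + q + 1 - x
      else if -(q : ℤ) ≤ x ∧ x ≤ -1 then x + ((q : ℤ) + 1)
      else if -(n : ℤ) ≤ x ∧ x < -(q : ℤ) then -((n : ℤ) + q + 1) - x else x := by
  rw [show sig n q = aw q * bw n q from rfl, Equiv.Perm.mul_apply,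
    show bw n q = bb q (n - 1 - q) from rfl, bb_eval, aw_eval]
  split_ifs <;> omega

lemma p_mem {n q : ℕ} (hq : q ≤ n) : p n q ∈ W n := by
  constructor
  · intro i
    simp only [p_eval hq]
    split_ifs <;> omega
  · intro i hi
    have hi' : i < -(n : ℤ) ∨ (n : ℤ) < i := by
      rcases abs_cases i with ⟨h1, _⟩ | ⟨h1, _⟩ <;> omega
    rw [p_eval hq]
    split_ifs <;> omega

lemma sig_mem {n q : ℕ} (hq : q ≤ n) : sig n q ∈ W n := by
  constructor
  · intro i
    simp only [sig_eval hq]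
    split_ifs <;> omega
  · intro i hi
    have hi' : i < -(n : ℤ) ∨ (n : ℤ) < i := by
      rcases abs_cases i with ⟨h1, _⟩ | ⟨h1, _⟩ <;> omega
    rw [sig_eval hq]
    split_ifs <;> omega

end Aux5
section Main

open Equiv Finset

set_option maxHeartbeats 1600000 in
lemma sig_flip_act {n q : ℕ} (hq : q ≤ n) {pr : ℤ × ℤ} (hpr : pr ∈ DD n)
    (hf : sig n q pr.2 < sig n q pr.1) :
    (actP (sig n q) pr).1 ≤ 0 ∨ (q : ℤ) < (actP (sig n q) pr).1 := by
  rw [mem_DD] at hpr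
  unfold actP nrm
  have ha := sig_eval hq pr.1
  have hb := sig_eval hq pr.2
  set A := sig n q pr.1 with hA
  set B := sig n q pr.2 with hB
  split_ifs at ha hb <;> split_ifs <;> dsimp only <;> omega

set_option maxHeartbeats 1600000 in
lemma good_noflip {n q : ℕ} (hq : q ≤ n) {X : ℤ × ℤ} (hX : X ∈ DD n)
    (hgood : 1 ≤ X.1 ∧ X.1 ≤ (q : ℤ) ∧ (q : ℤ) < X.2) :
    ¬ (sig n q X.2 < sig n q X.1) ∧ (actP (sig n q) X).1 ≤ 0 := by
  rw [mem_DD] at hX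
  unfold actP nrm
  have ha := sig_eval hq X.1
  have hb := sig_eval hq X.2
  set A := sig n q X.1 with hA
  set B := sig n q X.2 with hB
  split_ifs at ha hb <;> constructor <;> (try split_ifs) <;> (try dsimp only) <;> omega

end Main
theorem statement3 (n : ℕ) (hn : 2 ≤ n) (q : ℕ) (hq : q ≤ n) (π τ : Equiv.Perm ℤ)
    (hπ : Suf n π (p n q)) (hτ : Suf n τ (p n q)) :
    len n (π * sig n q * τ⁻¹) = len n π + len n (sig n q) + len n τ := by
  have hn1 : 1 ≤ n := by omega
  obtain ⟨z, hzW, hzp, hzlen⟩ := hπ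
  obtain ⟨y, hyW, hyp, hylen⟩ := hτ
  have hpW : p n q ∈ W n := p_mem hq
  have hσW : sig n q ∈ W n := sig_mem hq
  have hπW : π ∈ W n := by
    have he : π = z⁻¹ * p n q := by rw [hzp, ← mul_assoc, inv_mul_cancel, one_mul]
    rw [he]; exact W_mul (W_inv hzW) hpW
  have hτW : τ ∈ W n := by
    have he : τ = y⁻¹ * p n q := by rw [hyp, ← mul_assoc, inv_mul_cancel, one_mul]
    rw [he]; exact W_mul (W_inv hyW) hpW
  have hpchar : ∀ pr ∈ DD n, ((p n q) pr.2 < (p n q) pr.1) →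
      1 ≤ pr.1 ∧ pr.1 ≤ (q : ℤ) ∧ (q : ℤ) < pr.2 := by
    intro pr hpr hf
    rw [mem_DD] at hpr
    have ha := p_eval hq pr.1
    have hb := p_eval hq pr.2
    set A := p n q pr.1 with hA
    set B := p n q pr.2 with hB
    split_ifs at ha hb <;> omega
  have hπsub : ∀ pr ∈ DD n, (π pr.2 < π pr.1) →
      1 ≤ pr.1 ∧ pr.1 ≤ (q : ℤ) ∧ (q : ℤ) < pr.2 := by
    have hzpW : z * π ∈ W n := W_mul hzW hπW
    have hLLp : LL n (z * π) = LL n z + LL n π := by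
      rw [hzp] at hzlen
      rw [len_eq_LL hn1 hzpW, len_eq_LL hn1 hzW, len_eq_LL hn1 hπW] at hzlen
      exact hzlen
    have hsub := LL_flip_sub hzW hπW hLLp
    intro pr hpr hf
    apply hpchar pr hpr
    rw [hzp]
    exact hsub pr hpr hf
  have hτsub : ∀ pr ∈ DD n, (τ pr.2 < τ pr.1) →
      1 ≤ pr.1 ∧ pr.1 ≤ (q : ℤ) ∧ (q : ℤ) < pr.2 := by
    have hypW : y * τ ∈ W n := W_mul hyW hτW
    have hLLp : LL n (y * τ) = LL n y + LL n τ := by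
      rw [hyp] at hylen
      rw [len_eq_LL hn1 hypW, len_eq_LL hn1 hyW, len_eq_LL hn1 hτW] at hylen
      exact hylen
    have hsub := LL_flip_sub hyW hτW hLLp
    intro pr hpr hf
    apply hpchar pr hpr
    rw [hyp]
    exact hsub pr hpr hf
  have h1 : LL n (π * sig n q) = LL n π + LL n (sig n q) := by
    apply LL_mul_eq hπW hσW
    intro pr hpr hfσ hfπ
    have hmem := actP_mem hσW hpr
    have hgood := hπsub _ hmem hfπ
    have hkey := sig_flip_act hq hpr hfσ
    omega
  have hπσW := W_mul hπW hσW
  have h2 : LL n (π * sig n q * τ⁻¹) = LL n (π * sig n q) + LL n τ⁻¹ := by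
    apply LL_mul_eq hπσW (W_inv hτW)
    intro pr hpr hfτi
    intro hfuv
    have hXmem : actP τ⁻¹ pr ∈ DD n := actP_mem (W_inv hτW) hpr
    have hfτ : τ (actP τ⁻¹ pr).2 < τ (actP τ⁻¹ pr).1 := (flip_inv hτW hpr).mp hfτi
    have hgood := hτsub _ hXmem hfτ
    have hkey := good_noflip hq hXmem hgood
    have hx := (flip_mul hπW hσW hXmem).mp hfuv
    have hnoflipπ : ¬ (π (actP (sig n q) (actP τ⁻¹ pr)).2 <
        π (actP (sig n q) (actP τ⁻¹ pr)).1) := by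
      intro hc
      have h5 := hπsub _ (actP_mem hσW hXmem) hc
      have h6 := hkey.2
      omega
    exact hx (iff_of_false hnoflipπ hkey.1)
  have h3 := LL_inv hτW
  rw [len_eq_LL hn1 (W_mul hπσW (W_inv hτW)), len_eq_LL hn1 hπW, len_eq_LL hn1 hσW,
    len_eq_LL hn1 hτW]
  omega

end BnPaper
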